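/- For any real parameters a₁, a₂, a₄, b₁, b₂, b₄ with a₂ ≠ 0 and b₁ ≠ 0, the coefficient vector of the ODE family ẋ = a₁x + a₂y + a₄xy + ((a₁a₄ − b₂a₄ + a₂b₄)/(2a₂))x² + (a₂b₄/(2b₁))y², ẏ = b₁x + b₂y + b₄xy + (b₁a₄/(2a₂))x² + ((b₁a₄ − a₁b₄ + b₂b₄)/(2b₁))y², i.e., a₃ = (a₁a₄ − b₂a₄ + a₂b₄)/(2a₂), a₅ = a₂b₄/(2b₁), b₃ = b₁a₄/(2a₂), b₅ = (b₁a₄ − a₁b₄ + b₂b₄)/(2b₁), satisfies all nine defining quadratic equations of the variety 𝒳. -/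
import Mathlib


/-- The coefficients of the ODE family 𝒳 (with a₃, a₅, b₃, b₅ determined by
a₁, a₂, a₄, b₁, b₂, b₄) satisfy all nine defining quadrics of the variety 𝒳. -/
theorem stmt_15 (a₁ a₂ a₄ b₁ b₂ b₄ : ℝ) (ha₂ : a₂ ≠ 0) (hb₁ : b₁ ≠ 0)
    (a₃ a₅ b₃ b₅ : ℝ)
    (ha₃ : a₃ = (a₁ * a₄ - b₂ * a₄ + a₂ * b₄) / (2 * a₂))
    (ha₅ : a₅ = a₂ * b₄ / (2 * b₁))
    (hb₃ : b₃ = b₁ * a₄ / (2 * a₂))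
    (hb₅ : b₅ = (b₁ * a₄ - a₁ * b₄ + b₂ * b₄) / (2 * b₁)) :
    4 * a₅ * b₃ - a₄ * b₄ = 0 ∧
    2 * a₄ * b₃ - 2 * a₃ * b₄ + b₄ ^ 2 - 4 * b₃ * b₅ = 0 ∧
    2 * a₂ * b₃ - a₁ * b₄ + b₂ * b₄ - 2 * b₁ * b₅ = 0 ∧
    2 * a₅ * b₁ - a₂ * b₄ = 0 ∧
    a₄ * b₁ - a₁ * b₄ + b₂ * b₄ - 2 * b₁ * b₅ = 0 ∧
    2 * a₃ * b₁ - 2 * a₁ * b₃ + 2 * b₂ * b₃ - b₁ * b₄ = 0 ∧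
    a₄ ^ 2 - 4 * a₃ * a₅ + 2 * a₅ * b₄ - 2 * a₄ * b₅ = 0 ∧
    a₂ * a₄ - 2 * a₁ * a₅ + 2 * a₅ * b₂ - 2 * a₂ * b₅ = 0 ∧
    2 * a₂ * a₃ - a₁ * a₄ + a₄ * b₂ - a₂ * b₄ = 0 := by
  subst ha₃ ha₅ hb₃ hb₅
  refine ⟨?_,?_,?_,?_,?_,?_,?_,?_,?_⟩ <;> field_simp <;> ring
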